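/- Every Fσ subset of the Cantor space is σ-homogeneous, and every Gδ subset of the Cantor space is σ-homogeneous; that is, each such set X is a countable union of subspaces that are closed in X and h-homogeneous in the subspace topology. -/

import Mathlib

/-- A topological space is *h-homogeneous* if every nonempty clopen subset,
with the subspace topology, is homeomorphic to the whole space. -/
def HHomogeneous (Y : Type*) [TopologicalSpace Y] : Prop :=
  ∀ U : Set Y, IsClopen U → U.Nonempty → Nonempty (U ≃ₜ Y)

/-- A subset `X` of the Cantor space is *σ-homogeneous* if it is a countable
union of h-homogeneous subspaces that are closed in `X`. -/
def SigmaHomogeneous (X : Set (ℕ → Bool)) : Prop :=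
  ∃ f : ℕ → Set (ℕ → Bool),
    (∀ i, f i ⊆ X) ∧
    (∀ i, IsClosed (Subtype.val ⁻¹' f i : Set ↥X)) ∧
    (∀ i, HHomogeneous ↥(f i)) ∧
    X = ⋃ i, f i

namespace SigmaHomAux

open Set PiNat Topology Function

section Engine

variable {β : Type} [TopologicalSpace β] [DiscreteTopology β]
variable {α : Type} [MetricSpace α]

theorem scheme_homeo (A : List β → Set α)
    (hroot : A [] = Set.univ)
    (hne : ∀ l, (A l).Nonempty)
    (hclopen : ∀ l, IsClopen (A l))
    (hcover : ∀ l, A l ⊆ ⋃ b, A (b :: l))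
    (hsub : ∀ l b, A (b :: l) ⊆ A l)
    (hdisj : CantorScheme.Disjoint A)
    (hdiam : CantorScheme.VanishingDiam A)
    (htot : ∀ x : ℕ → β, (⋂ n, A (res x n)).Nonempty) :
    Nonempty ((ℕ → β) ≃ₜ α) := by
  have hβ : Nonempty β := by
    obtain ⟨a, ha⟩ := hne []
    obtain ⟨b, -⟩ := mem_iUnion.1 (hcover [] ha)
    exact ⟨b⟩
  have hdom : ∀ x : ℕ → β, x ∈ (CantorScheme.inducedMap A).1 := fun x => htot x
  set F : (ℕ → β) → α := fun x => (CantorScheme.inducedMap A).2 ⟨x, hdom x⟩ with hF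
  have hmem : ∀ (x : ℕ → β) (n : ℕ), F x ∈ A (res x n) := fun x n =>
    CantorScheme.map_mem ⟨x, hdom x⟩ n
  have hanti : ∀ x : ℕ → β, Antitone fun n => A (res x n) := fun x =>
    antitone_nat_of_succ_le fun n => by rw [res_succ]; exact hsub _ _
  -- uniqueness of points in all sets along a branch
  have key_eq : ∀ (a : α) (x : ℕ → β), (∀ n, a ∈ A (res x n)) → F x = a := by
    intro a x h
    apply eq_of_dist_eq_zero
    by_contra hd
    have hpos : 0 < dist (F x) a := lt_of_le_of_ne dist_nonneg (Ne.symm hd)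
    obtain ⟨n, hn⟩ := hdiam.dist_lt _ hpos x
    exact absurd (hn _ (hmem x n) _ (h n)) (lt_irrefl _)
  -- extension lemma
  have ext : ∀ (a : α) (x : ℕ → β) (n : ℕ), a ∈ A (res x n) →
      ∃ y : ℕ → β, (∀ i, i < n → y i = x i) ∧ F y = a := by
    intro a x n ha
    have H : ∀ l : {l : List β // a ∈ A l}, ∃ b : β, a ∈ A (b :: l.1) := by
      rintro ⟨l, hl⟩
      exact mem_iUnion.1 (hcover l hl)
    choose g hg using H
    set seq : ℕ → {l : List β // a ∈ A l} := fun k =>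
      Nat.rec ⟨res x n, ha⟩ (fun _ p => ⟨g p :: p.1, hg p⟩) k with hseqdef
    have hseq : ∀ k, seq (k + 1) = ⟨g (seq k) :: (seq k).1, hg (seq k)⟩ := fun k => rfl
    set y : ℕ → β := fun m => if m < n then x m else g (seq (m - n)) with hy
    have hyx : ∀ i, i < n → y i = x i := fun i hi => by simp [hy, hi]
    have hres : ∀ k, res y (n + k) = (seq k).1 := by
      intro k
      induction k with
      | zero =>
        exact (res_eq_res.2 fun m hm => hyx m hm : res y n = res x n)
      | succ k ih =>
        rw [← Nat.add_assoc, res_succ, ih, hseq]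
        have hny : ¬ (n + k < n) := by omega
        simp only [hy, hny, if_false, Nat.add_sub_cancel_left]
    have hmemy : ∀ m, a ∈ A (res y m) := by
      intro m
      have h1 : a ∈ A (res y (n + m)) := by rw [hres m]; exact (seq m).2
      exact hanti y (Nat.le_add_left m n) h1
    exact ⟨y, hyx, key_eq a y hmemy⟩
  -- surjectivity
  have hsurj : Surjective F := by
    intro a
    obtain ⟨b⟩ := hβ
    have ha : a ∈ A (res (fun _ => b) 0) := by rw [res_zero, hroot]; trivial
    obtain ⟨y, -, hy⟩ := ext a (fun _ => b) 0 ha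
    exact ⟨y, hy⟩
  -- injectivity
  have hinj : Injective F := by
    intro x y hxy
    have := CantorScheme.Disjoint.map_injective hdisj (a₁ := ⟨x, hdom x⟩) (a₂ := ⟨y, hdom y⟩) hxy
    exact congrArg Subtype.val this
  -- continuity
  have hcont : Continuous F := by
    have h1 : Continuous (CantorScheme.inducedMap A).2 := hdiam.map_continuous
    exact h1.comp (Continuous.subtype_mk continuous_id _)
  -- image of cylinders
  have himage : ∀ (x : ℕ → β) (n : ℕ), F '' cylinder x n = A (res x n) := by
    intro x n
    apply Subset.antisymm
    · rintro _ ⟨y, hy, rfl⟩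
      rw [cylinder_eq_res, mem_setOf] at hy
      rw [← hy]
      exact hmem y n
    · intro a ha
      obtain ⟨y, hyx, hy⟩ := ext a x n ha
      refine ⟨y, ?_, hy⟩
      rw [cylinder_eq_res, mem_setOf]
      exact res_eq_res.2 fun m hm => hyx m hm
  -- open map
  have hopen : IsOpenMap F := by
    intro U hU
    obtain ⟨S, hS, rfl⟩ := (isTopologicalBasis_cylinders fun _ : ℕ => β).open_eq_sUnion hU
    rw [image_sUnion]
    apply isOpen_sUnion
    rintro _ ⟨t, htS, rfl⟩
    obtain ⟨x, n, rfl⟩ := hS htS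
    rw [himage]
    exact (hclopen _).isOpen
  exact ⟨Equiv.toHomeomorphOfContinuousOpen (Equiv.ofBijective F ⟨hinj, hsurj⟩) hcont hopen⟩

end Engine

/-! ### Basic facts about the Cantor space -/

lemma ofReal_half_pow (n : ℕ) : ENNReal.ofReal ((1/2 : ℝ)^n) = 2⁻¹ ^ n := by
  rw [ENNReal.ofReal_pow (by norm_num)]
  congr 1
  rw [ENNReal.ofReal_div_of_pos (by norm_num)]
  simp

lemma isClopen_cylinder (x : ℕ → Bool) (n : ℕ) : IsClopen (cylinder x n) := by
  constructor
  · rw [cylinder_eq_pi]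
    apply isClosed_set_pi
    intro i _
    exact isClosed_discrete _
  · exact isOpen_cylinder (E := fun _ : ℕ => Bool) x n

/-- Cylinder preimages form a neighborhood basis in subspaces of Cantor space. -/
lemma exists_cylinder_subset {Z : Set (ℕ → Bool)} {V : Set ↥Z} (hV : IsOpen V)
    {y : ↥Z} (hy : y ∈ V) :
    ∃ m, (Subtype.val ⁻¹' cylinder (y : ℕ → Bool) m : Set ↥Z) ⊆ V := by
  obtain ⟨O, hO, rfl⟩ := isOpen_induced_iff.1 hV
  obtain ⟨v, ⟨z, m, rfl⟩, hyv, hsub⟩ :=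
    (isTopologicalBasis_cylinders (fun _ : ℕ => Bool)).exists_subset_of_mem_open hy hO
  rw [mem_cylinder_iff_eq] at hyv
  exact ⟨m, fun u hu => hsub (by rw [← hyv]; exact hu)⟩

/-- Ambient version. -/
lemma exists_cylinder_subset' {O : Set (ℕ → Bool)} (hO : IsOpen O)
    {y : ℕ → Bool} (hy : y ∈ O) : ∃ m, cylinder y m ⊆ O := by
  obtain ⟨v, ⟨z, m, rfl⟩, hyv, hsub⟩ :=
    (isTopologicalBasis_cylinders (fun _ : ℕ => Bool)).exists_subset_of_mem_open hy hO
  rw [mem_cylinder_iff_eq] at hyv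
  exact ⟨m, by rw [hyv]; exact hsub⟩

section WithMetric

attribute [local instance] PiNat.metricSpace

lemma diam_le_of_agree {Z : Set (ℕ → Bool)} {S : Set ↥Z} {n : ℕ}
    (h : ∀ u ∈ S, ∀ v ∈ S, ∀ i < n, (u : ℕ → Bool) i = (v : ℕ → Bool) i) :
    EMetric.diam S ≤ 2⁻¹ ^ n := by
  rw [← ofReal_half_pow]
  apply EMetric.diam_le
  intro u hu v hv
  rw [edist_dist]
  apply ENNReal.ofReal_le_ofReal
  rw [Subtype.dist_eq]
  have : (u : ℕ → Bool) ∈ cylinder (v : ℕ → Bool) n := by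
    rw [mem_cylinder_iff]
    intro i hi
    exact h u hu v hv i hi
  exact mem_cylinder_iff_dist_le.1 this

lemma vanishing_of_diam_bound {Z : Set (ℕ → Bool)} {β : Type} {A : List β → Set ↥Z}
    (hbd : ∀ (l : List β) (b : β), EMetric.diam (A (b :: l)) ≤ 2⁻¹ ^ l.length) :
    CantorScheme.VanishingDiam A := by
  intro x
  rw [ENNReal.tendsto_atTop_zero]
  intro ε hε
  obtain ⟨k, hk⟩ := ENNReal.exists_inv_two_pow_lt (ne_of_gt hε)
  refine ⟨k + 1, fun n hn => ?_⟩
  obtain ⟨j, rfl⟩ : ∃ j, n = j + 1 := ⟨n - 1, by omega⟩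
  rw [res_succ]
  calc EMetric.diam (A (x j :: res x j)) ≤ 2⁻¹ ^ (res x j).length := hbd _ _
    _ = 2⁻¹ ^ j := by rw [res_length]
    _ ≤ 2⁻¹ ^ k := pow_le_pow_of_le_one (by positivity) (by norm_num) (by omega)
    _ ≤ ε := le_of_lt hk

/-- Brouwer: a nonempty perfect subset of the Cantor space is homeomorphic to the
Cantor space. -/
theorem cantor_homeo {C : Set (ℕ → Bool)} (hC : Perfect C) (hCne : C.Nonempty) :
    Nonempty ((ℕ → Bool) ≃ₜ ↥C) := by
  have hCcl : IsClosed C := hC.closed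
  have hCcpt : CompactSpace ↥C := isCompact_iff_compactSpace.1 hCcl.isCompact
  -- every nonempty open subset of C has two points
  have htwo : ∀ U : Set ↥C, IsOpen U → U.Nonempty →
      ∃ u ∈ U, ∃ v ∈ U, u ≠ v := by
    rintro U hU ⟨u, hu⟩
    obtain ⟨O, hO, rfl⟩ := isOpen_induced_iff.1 hU
    have hacc := accPt_iff_nhds.1 (hC.acc u.1 u.2)
    obtain ⟨y, ⟨hyO, hyC⟩, hyne⟩ := hacc O (hO.mem_nhds hu)
    exact ⟨⟨y, hyC⟩, hyO, u, hu, fun h => hyne (congrArg Subtype.val h)⟩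
  -- splitting coordinate
  set δ : Set ↥C → ℕ :=
    fun S => sInf {i | ∃ u ∈ S, ∃ v ∈ S, (u : ℕ → Bool) i ≠ (v : ℕ → Bool) i} with hδ
  have hSplitne : ∀ S : Set ↥C, IsOpen S → S.Nonempty →
      {i | ∃ u ∈ S, ∃ v ∈ S, (u : ℕ → Bool) i ≠ (v : ℕ → Bool) i}.Nonempty := by
    intro S hS hSne
    obtain ⟨u, hu, v, hv, huv⟩ := htwo S hS hSne
    have : ∃ i, (u : ℕ → Bool) i ≠ (v : ℕ → Bool) i := by
      by_contra h
      push_neg at h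
      exact huv (Subtype.ext (funext h))
    obtain ⟨i, hi⟩ := this
    exact ⟨i, u, hu, v, hv, hi⟩
  have hδ_min : ∀ (S : Set ↥C) (i), i < δ S → ∀ u ∈ S, ∀ v ∈ S,
      (u : ℕ → Bool) i = (v : ℕ → Bool) i := by
    intro S i hi u hu v hv
    by_contra h
    exact Nat.notMem_of_lt_sInf hi ⟨u, hu, v, hv, h⟩
  -- the scheme
  set T : List Bool → Set ↥C := fun l =>
    List.rec Set.univ (fun b _ ih => {u ∈ ih | (u : ℕ → Bool) (δ ih) = b}) l with hT
  have hTcons : ∀ b l, T (b :: l) = {u ∈ T l | (u : ℕ → Bool) (δ (T l)) = b} := fun _ _ => rfl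
  -- invariant
  have inv : ∀ l : List Bool, (T l).Nonempty ∧ IsClopen (T l) ∧
      ∀ i < l.length, ∀ u ∈ T l, ∀ v ∈ T l, (u : ℕ → Bool) i = (v : ℕ → Bool) i := by
    intro l
    induction l with
    | nil =>
      have : Nonempty ↥C := hCne.to_subtype
      refine ⟨univ_nonempty, isClopen_univ, ?_⟩
      intro i hi
      simp at hi
    | cons b l ih =>
      obtain ⟨hne, hclopen, hagree⟩ := ih
      have hSne := hSplitne (T l) hclopen.isOpen hne
      have hδ_split := Nat.sInf_mem hSne
      have hδge : l.length ≤ δ (T l) := by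
        apply le_csInf hSne
        intro i hi
        by_contra hlt
        push_neg at hlt
        obtain ⟨u, hu, v, hv, huv⟩ := hi
        exact huv (hagree i hlt u hu v hv)
      refine ⟨?_, ?_, ?_⟩
      · obtain ⟨u, hu, v, hv, huv⟩ := hδ_split
        rw [hTcons]
        by_cases h : (u : ℕ → Bool) (δ (T l)) = b
        · exact ⟨u, hu, h⟩
        · refine ⟨v, hv, ?_⟩
          revert huv h
          cases b <;> cases hu' : ((u : ℕ → Bool) (δ (T l))) <;>
            cases hv' : ((v : ℕ → Bool) (δ (T l))) <;> simp
      · rw [hTcons]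
        have hcont : Continuous fun u : ↥C => (u : ℕ → Bool) (δ (T l)) :=
          (continuous_apply _).comp continuous_subtype_val
        exact hclopen.inter ((isClopen_discrete {b}).preimage hcont)
      · intro i hi u hu v hv
        rw [hTcons] at hu hv
        rcases Nat.lt_or_ge i (δ (T l)) with h | h
        · exact hδ_min _ i h u hu.1 v hv.1
        · have hix : i = δ (T l) := by
            have : i ≤ l.length := by simpa using Nat.lt_succ_iff.1 hi
            omega
          rw [hix, hu.2, hv.2]
  -- apply the engine
  apply scheme_homeo T rfl (fun l => (inv l).1) (fun l => (inv l).2.1)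
  · intro l u hu
    exact mem_iUnion.2 ⟨(u : ℕ → Bool) (δ (T l)), by rw [hTcons]; exact ⟨hu, rfl⟩⟩
  · intro l b
    rw [hTcons]
    exact sep_subset _ _
  · intro l a b hab
    rw [Set.disjoint_left]
    intro u hu hv
    rw [hTcons] at hu hv
    exact hab (hu.2 ▸ hv.2.symm ▸ rfl)
  · apply vanishing_of_diam_bound
    intro l b
    apply diam_le_of_agree
    intro u hu v hv i hi
    exact (inv (b :: l)).2.2 i (by simpa using Nat.lt_succ_of_lt hi) u hu v hv
  · intro x
    apply IsCompact.nonempty_iInter_of_sequence_nonempty_isCompact_isClosed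
    · intro n
      rw [res_succ]
      exact sep_subset _ _
    · exact fun n => (inv _).1
    · exact ((inv (res x 0)).2.1).isClosed.isCompact
    · exact fun n => ((inv _).2.1).isClosed

section Part3

lemma reindex_nonempty {γ : Type*} {Q : ℕ → Set γ}
    (hdis : Pairwise (Function.onFun Disjoint Q))
    (hinf : {k | (Q k).Nonempty}.Infinite) :
    ∃ P : ℕ → Set γ, (∀ i, (P i).Nonempty) ∧ Pairwise (Function.onFun Disjoint P) ∧
      (⋃ i, P i) = (⋃ k, Q k) ∧ ∀ i, ∃ k, P i = Q k := by
  refine ⟨fun i => Q (Nat.nth (fun k => (Q k).Nonempty) i),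
    fun i => Nat.nth_mem_of_infinite hinf i,
    fun i j hij => hdis ((Nat.nth_injective hinf).ne hij), ?_, fun i => ⟨_, rfl⟩⟩
  apply Subset.antisymm
  · exact iUnion_subset fun i => subset_iUnion Q _
  · intro a ha
    obtain ⟨k, hk⟩ := mem_iUnion.1 ha
    have : k ∈ Set.range (Nat.nth fun k => (Q k).Nonempty) := by
      rw [Nat.range_nth_of_infinite hinf]; exact ⟨a, hk⟩
    obtain ⟨i, rfl⟩ := this
    exact mem_iUnion.2 ⟨i, hk⟩

lemma gdelta_rep {Z : Set (ℕ → Bool)} (hZ : IsGδ Z) :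
    ∃ O : ℕ → Set (ℕ → Bool), (∀ n, IsOpen (O n)) ∧ (⋂ n, O n) = Z := by
  obtain ⟨T, hTopen, hTct, rfl⟩ := hZ
  rcases eq_empty_or_nonempty T with rfl | hTne
  · exact ⟨fun _ => univ, fun _ => isOpen_univ, by simp⟩
  obtain ⟨g, rfl⟩ := Set.Countable.exists_eq_range hTct hTne
  exact ⟨g, fun n => hTopen _ ⟨n, rfl⟩, (Set.sInter_range g).symm ▸ rfl⟩

end Part3

/-- Alexandrov–Urysohn: a nonempty Gδ subset of Cantor space in which no compact
set has nonempty relative interior is homeomorphic to the Baire space. -/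
theorem baire_homeo {Z : Set (ℕ → Bool)} (hZ : IsGδ Z) (hZne : Z.Nonempty)
    (hnc : ∀ K : Set (ℕ → Bool), K ⊆ Z → IsCompact K →
      ∀ O : Set (ℕ → Bool), IsOpen O → O ∩ Z ⊆ K → O ∩ Z = ∅) :
    Nonempty ((ℕ → ℕ) ≃ₜ ↥Z) := by
  classical
  obtain ⟨O, hOopen, hOinter⟩ := gdelta_rep hZ
  have hOsub : ∀ n, Z ⊆ O n := fun n => hOinter ▸ iInter_subset O n
  -- the "entering radius" for the Gδ structure
  set ρ : ℕ → (ℕ → Bool) → ℕ := fun n z => sInf {m | cylinder z m ⊆ O n} with hρdef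
  have hρ1 : ∀ n (z : ℕ → Bool), z ∈ Z → cylinder z (ρ n z) ⊆ O n := by
    intro n z hz
    exact Nat.sInf_mem (exists_cylinder_subset' (hOopen n) (hOsub n hz))
  have hcyl_congr : ∀ (z w : ℕ → Bool) (m : ℕ), res w m = res z m → cylinder w m = cylinder z m := by
    intro z w m h
    rw [cylinder_eq_res, cylinder_eq_res, h]
  have hρconst : ∀ n (z w : ℕ → Bool), z ∈ Z → w ∈ Z → res w (ρ n z) = res z (ρ n z) →
      ρ n w = ρ n z := by
    intro n z w hz hw hres
    have le1 : ρ n w ≤ ρ n z := Nat.sInf_le (by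
      show cylinder w (ρ n z) ⊆ O n
      rw [hcyl_congr z w _ hres]
      exact hρ1 n z hz)
    have hres2 : res w (ρ n w) = res z (ρ n w) :=
      res_eq_res.2 fun i hi => res_eq_res.1 hres (lt_of_lt_of_le hi le1)
    have le2 : ρ n z ≤ ρ n w := Nat.sInf_le (by
      show cylinder z (ρ n w) ⊆ O n
      rw [← hcyl_congr z w _ hres2]
      exact hρ1 n w hw)
    omega
  -- partition lemma
  have hpart : ∀ (U : Set ↥Z), IsClopen U → U.Nonempty → ∀ n,
      ∃ P : ℕ → Set ↥Z, (∀ k, (P k).Nonempty) ∧ (∀ k, IsClopen (P k)) ∧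
        Pairwise (Function.onFun Disjoint P) ∧ (⋃ k, P k) = U ∧
        (∀ k, ∀ u ∈ P k, ∀ v ∈ P k, ∀ i < n, (u : ℕ → Bool) i = (v : ℕ → Bool) i) ∧
        (∀ k, closure (Subtype.val '' P k) ⊆ O n) := by
    intro U hU hUne n
    obtain ⟨OU, hOU, hOUpre⟩ := isOpen_induced_iff.1 hU.isOpen
    have hval : Subtype.val '' U = Z ∩ OU := by
      rw [← hOUpre, Subtype.image_preimage_coe]
    have himgsub : Subtype.val '' U ⊆ Z := by rw [hval]; exact inter_subset_left
    have hncU : ¬ IsCompact (Subtype.val '' U) := by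
      intro hK
      obtain ⟨u, hu⟩ := hUne
      have h0 := hnc _ himgsub hK OU hOU (by rw [inter_comm, ← hval])
      have : (u : ℕ → Bool) ∈ OU ∩ Z := by
        refine ⟨?_, u.2⟩
        have : (u : ℕ → Bool) ∈ Z ∩ OU := hval ▸ mem_image_of_mem _ hu
        exact this.2
      rw [h0] at this
      exact this
    obtain ⟨p, hpcl, hpnot⟩ : ∃ p ∈ closure (Subtype.val '' U), p ∉ Subtype.val '' U := by
      by_contra h
      push_neg at h
      have hcl : IsClosed (Subtype.val '' U) := by
        rw [← closure_subset_iff_isClosed]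
        exact h
      exact hncU hcl.isCompact
    have hnep : ∀ u : ↥Z, u ∈ U → (u : ℕ → Bool) ≠ p := by
      intro u hu h
      exact hpnot ⟨u, hu, h⟩
    -- the canonical locally constant "signature" map
    set m : ↥Z → ℕ := fun u =>
      max (max n (firstDiff (u : ℕ → Bool) p + 1)) (ρ n (u : ℕ → Bool)) with hm
    set ψ : ↥Z → List Bool := fun u => res (u : ℕ → Bool) (m u) with hψ
    set fiber : List Bool → Set ↥Z := fun l => {u ∈ U | ψ u = l} with hfiber
    have hmlen : ∀ u, (ψ u).length = m u := fun u => res_length _ _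
    -- local constancy
    have hloc : ∀ u ∈ U, ∀ w : ↥Z, w ∈ U →
        res (w : ℕ → Bool) (m u) = res (u : ℕ → Bool) (m u) → ψ w = ψ u := by
      intro u hu w hw hres
      have hagr : ∀ i, i < m u → (w : ℕ → Bool) i = (u : ℕ → Bool) i :=
        fun i hi => res_eq_res.1 hres hi
      have hfd : firstDiff (w : ℕ → Bool) p = firstDiff (u : ℕ → Bool) p := by
        set fu := firstDiff (u : ℕ → Bool) p with hfu
        set fw := firstDiff (w : ℕ → Bool) p with hfw
        have hfu_lt : fu + 1 ≤ m u := le_trans (le_max_right _ _) (le_max_left _ _)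
        rcases lt_trichotomy fw fu with h | h | h
        · exfalso
          apply apply_firstDiff_ne (hnep w hw)
          rw [hagr fw (by omega)]
          exact apply_eq_of_lt_firstDiff h
        · exact h
        · exfalso
          apply apply_firstDiff_ne (hnep u hu)
          rw [← hagr fu (by omega)]
          exact apply_eq_of_lt_firstDiff h
      have hρw : ρ n (w : ℕ → Bool) = ρ n (u : ℕ → Bool) := by
        apply hρconst n _ _ u.2 w.2
        exact res_eq_res.2 fun i hi =>
          hagr i (lt_of_lt_of_le hi (le_max_right _ _))
      have hmw : m w = m u := by rw [hm]; simp only [hfd, hρw]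
      rw [hψ]
      simp only [hmw]
      exact hres
    -- fibers are open
    have hfibopen : ∀ l, IsOpen (fiber l) := by
      intro l
      have : fiber l = ⋃ (u : ↥Z) (_ : u ∈ fiber l),
          ((Subtype.val ⁻¹' cylinder (u : ℕ → Bool) (m u)) ∩ U) := by
        apply Subset.antisymm
        · intro u hu
          refine mem_iUnion.2 ⟨u, mem_iUnion.2 ⟨hu, ?_, hu.1⟩⟩
          rw [mem_preimage]
          exact self_mem_cylinder _ _
        · intro w hw
          obtain ⟨u, hu'⟩ := mem_iUnion.1 hw
          obtain ⟨hu, hwcyl, hwU⟩ := mem_iUnion.1 hu'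
          have : res (w : ℕ → Bool) (m u) = res (u : ℕ → Bool) (m u) := by
            have := hwcyl
            rw [mem_preimage, cylinder_eq_res, mem_setOf] at this
            exact this
          exact ⟨hwU, (hloc u hu.1 w hwU this).trans hu.2⟩
      rw [this]
      apply isOpen_iUnion
      intro u
      apply isOpen_iUnion
      intro _
      exact ((isClopen_cylinder _ _).preimage continuous_subtype_val).isOpen.inter hU.isOpen
    -- fibers are clopen
    have hfibclopen : ∀ l, IsClopen (fiber l) := by
      intro l
      refine ⟨?_, hfibopen l⟩
      have : fiber l = U ∩ (⋃ (l' : List Bool) (_ : l' ≠ l), fiber l')ᶜ := by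
        apply Subset.antisymm
        · intro u hu
          refine ⟨hu.1, ?_⟩
          intro hmem
          obtain ⟨l', hl'⟩ := mem_iUnion.1 hmem
          obtain ⟨hne', hufib⟩ := mem_iUnion.1 hl'
          exact hne' (hufib.2.symm.trans hu.2)
        · rintro u ⟨huU, hcomp⟩
          refine ⟨huU, ?_⟩
          by_contra h
          exact hcomp (mem_iUnion.2 ⟨ψ u, mem_iUnion.2 ⟨h, huU, rfl⟩⟩)
      rw [this]
      exact hU.isClosed.inter (isClosed_compl_iff.2
        (isOpen_iUnion fun l' => isOpen_iUnion fun _ => hfibopen l'))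
    -- agreement
    have hfib_agree : ∀ l, ∀ u ∈ fiber l, ∀ v ∈ fiber l, ∀ i < n,
        (u : ℕ → Bool) i = (v : ℕ → Bool) i := by
      intro l u hu v hv i hi
      have h1 : res (u : ℕ → Bool) (m u) = res (v : ℕ → Bool) (m v) := hu.2.trans hv.2.symm
      have hmu : m u = m v := by
        have := congrArg List.length h1
        rwa [res_length, res_length] at this
      have hn_le : n ≤ m u := le_trans (le_max_left _ _) (le_max_left _ _)
      rw [hmu] at h1
      exact res_eq_res.1 h1 (lt_of_lt_of_le hi (hmu ▸ hn_le))
    -- closure condition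
    have hfib_closure : ∀ l, closure (Subtype.val '' fiber l) ⊆ O n := by
      intro l
      rcases eq_empty_or_nonempty (fiber l) with h | ⟨u₀, hu₀⟩
      · rw [h]
        simp
      have hsub : Subtype.val '' fiber l ⊆ cylinder (u₀ : ℕ → Bool) (ρ n (u₀ : ℕ → Bool)) := by
        rintro _ ⟨w, hw, rfl⟩
        have h1 : res (w : ℕ → Bool) (m w) = res (u₀ : ℕ → Bool) (m u₀) := hw.2.trans hu₀.2.symm
        have hmu : m w = m u₀ := by
          have := congrArg List.length h1
          rwa [res_length, res_length] at this
        rw [hmu] at h1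
        have hρle : ρ n (u₀ : ℕ → Bool) ≤ m u₀ := le_max_right _ _
        rw [mem_cylinder_iff]
        intro i hi
        exact res_eq_res.1 h1 (lt_of_lt_of_le hi hρle)
      calc closure (Subtype.val '' fiber l)
          ⊆ closure (cylinder (u₀ : ℕ → Bool) (ρ n (u₀ : ℕ → Bool))) := closure_mono hsub
        _ = cylinder (u₀ : ℕ → Bool) (ρ n (u₀ : ℕ → Bool)) :=
            (isClopen_cylinder _ _).isClosed.closure_eq
        _ ⊆ O n := hρ1 n _ u₀.2
    -- union and disjointness
    have hfib_union : (⋃ l, fiber l) = U := by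
      apply Subset.antisymm
      · exact iUnion_subset fun l u hu => hu.1
      · intro u hu
        exact mem_iUnion.2 ⟨ψ u, hu, rfl⟩
    have hfib_disj : ∀ l l', l ≠ l' → Disjoint (fiber l) (fiber l') := by
      intro l l' hne'
      rw [Set.disjoint_left]
      intro u hu hu'
      exact hne' (hu.2.symm.trans hu'.2)
    -- the set of nonempty fibers is infinite
    have hinf : {l | (fiber l).Nonempty}.Infinite := by
      have hlen : ∀ k : ℕ, ∃ l ∈ {l | (fiber l).Nonempty}, k < l.length := by
        intro k
        have hcylopen : IsOpen (cylinder p (k+1)) := (isClopen_cylinder _ _).isOpen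
        obtain ⟨z, hz1, hz2⟩ := (mem_closure_iff.1 hpcl) _ hcylopen (self_mem_cylinder _ _)
        obtain ⟨u, hu, rfl⟩ := hz2
        refine ⟨ψ u, ⟨u, hu, rfl⟩, ?_⟩
        rw [hmlen]
        have hfd : k + 1 ≤ firstDiff (u : ℕ → Bool) p := by
          by_contra h
          push_neg at h
          apply apply_firstDiff_ne (hnep u hu)
          rw [mem_cylinder_iff] at hz1
          exact hz1 _ h
        have : firstDiff (u : ℕ → Bool) p + 1 ≤ m u :=
          le_trans (le_max_right _ _) (le_max_left _ _)
        omega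
      intro hfin
      obtain ⟨B, hB⟩ := (hfin.image (f := List.length)).bddAbove
      obtain ⟨l, hl, hlen'⟩ := hlen B
      exact absurd (hB (mem_image_of_mem _ hl)) (by omega)
    -- encode fibers by natural numbers
    set Q : ℕ → Set ↥Z := fun k => (Encodable.decode₂ (List Bool) k).elim ∅ fiber with hQ
    have hQfib : ∀ l, Q (Encodable.encode l) = fiber l := by
      intro l
      rw [hQ]
      simp [Encodable.encodek₂]
    have hQcases : ∀ k, Q k = ∅ ∨ ∃ l, Encodable.encode l = k ∧ Q k = fiber l := by
      intro k
      rcases h : Encodable.decode₂ (List Bool) k with - | l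
      · left; rw [hQ]; simp [h]
      · right
        exact ⟨l, Encodable.mem_decode₂.1 h, by rw [hQ]; simp [h]⟩
    have hQdisj : Pairwise (Function.onFun Disjoint Q) := by
      intro k k' hkk'
      rcases hQcases k with h | ⟨l, hl, h⟩
      · rw [Function.onFun, h]; exact disjoint_bot_left
      rcases hQcases k' with h' | ⟨l', hl', h'⟩
      · rw [Function.onFun, h']; exact disjoint_bot_right
      rw [Function.onFun, h, h']
      exact hfib_disj l l' (by rintro rfl; exact hkk' (hl ▸ hl'.symm ▸ rfl))
    have hQinf : {k | (Q k).Nonempty}.Infinite := by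
      apply Set.Infinite.mono (s := Encodable.encode '' {l | (fiber l).Nonempty})
      · rintro _ ⟨l, hl, rfl⟩
        rw [mem_setOf, hQfib]
        exact hl
      · exact hinf.image (Set.injOn_of_injective Encodable.encode_injective)
    have hQunion : (⋃ k, Q k) = U := by
      apply Subset.antisymm
      · apply iUnion_subset
        intro k
        rcases hQcases k with h | ⟨l, _, h⟩
        · rw [h]; exact empty_subset _
        · rw [h, ← hfib_union]; exact subset_iUnion fiber l
      · rw [← hfib_union]
        apply iUnion_subset
        intro l
        rw [← hQfib l]
        exact subset_iUnion Q _
    -- reindex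
    obtain ⟨P, hPne, hPdisj, hPunion, hPQ⟩ := reindex_nonempty hQdisj hQinf
    have hPfib : ∀ i, ∃ l, P i = fiber l := by
      intro i
      obtain ⟨k, hk⟩ := hPQ i
      rcases hQcases k with h | ⟨l, _, h⟩
      · exfalso
        have h2 := hPne i
        rw [hk, h] at h2
        exact h2.ne_empty rfl
      · exact ⟨l, hk.trans h⟩
    refine ⟨P, hPne, ?_, hPdisj, by rw [hPunion, hQunion], ?_, ?_⟩
    · intro i; obtain ⟨l, hl⟩ := hPfib i; rw [hl]; exact hfibclopen l
    · intro i; obtain ⟨l, hl⟩ := hPfib i; rw [hl]; exact hfib_agree l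
    · intro i; obtain ⟨l, hl⟩ := hPfib i; rw [hl]; exact hfib_closure l
  -- build the scheme
  have : Nonempty ↥Z := hZne.to_subtype
  -- choose partitions
  have hchoice : ∀ (S : {S : Set ↥Z // IsClopen S ∧ S.Nonempty}) (n : ℕ),
      ∃ P : ℕ → Set ↥Z, (∀ k, (P k).Nonempty) ∧ (∀ k, IsClopen (P k)) ∧
        Pairwise (Function.onFun Disjoint P) ∧ (⋃ k, P k) = S.1 ∧
        (∀ k, ∀ u ∈ P k, ∀ v ∈ P k, ∀ i < n, (u : ℕ → Bool) i = (v : ℕ → Bool) i) ∧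
        (∀ k, closure (Subtype.val '' P k) ⊆ O n) :=
    fun S n => hpart S.1 S.2.1 S.2.2 n
  choose pt hne' hclopen' hdisj' hunion' hagree' hclosure' using hchoice
  -- the scheme, by recursion
  set T' : List ℕ → {S : Set ↥Z // IsClopen S ∧ S.Nonempty} := fun l =>
    List.rec ⟨Set.univ, isClopen_univ, univ_nonempty⟩
      (fun k l ih => ⟨pt ih l.length k, hclopen' ih l.length k, hne' ih l.length k⟩) l
    with hT'
  set T : List ℕ → Set ↥Z := fun l => (T' l).1 with hT
  have hTcons : ∀ k l, T (k :: l) = pt (T' l) l.length k := fun _ _ => rfl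
  have hTsub : ∀ l (k : ℕ), T (k :: l) ⊆ T l := by
    intro l k
    have h1 : pt (T' l) l.length k ⊆ ⋃ j, pt (T' l) l.length j := subset_iUnion _ k
    rw [hunion' (T' l) l.length] at h1
    exact h1
  -- apply the engine
  apply scheme_homeo T rfl (fun l => (T' l).2.2) (fun l => (T' l).2.1)
  · intro l u hu
    have h2 : u ∈ ⋃ j, pt (T' l) l.length j := by
      rw [hunion' (T' l) l.length]; exact hu
    obtain ⟨k, hk⟩ := mem_iUnion.1 h2
    exact mem_iUnion.2 ⟨k, by rw [hTcons]; exact hk⟩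
  · exact fun l k => hTsub l k
  · intro l a b hab
    rw [hTcons, hTcons]
    exact hdisj' (T' l) l.length hab
  · apply vanishing_of_diam_bound
    intro l b
    rw [hTcons]
    exact diam_le_of_agree fun u hu v hv i hi => hagree' (T' l) l.length b u hu v hv i hi
  · intro x
    set K : ℕ → Set (ℕ → Bool) := fun m => closure (Subtype.val '' T (res x m)) with hK
    have hKsub : ∀ m, K (m + 1) ⊆ K m := by
      intro m
      apply closure_mono
      apply image_mono
      rw [res_succ]
      exact hTsub _ _
    have hKne : ∀ m, (K m).Nonempty := by
      intro m
      obtain ⟨u, hu⟩ := (T' (res x m)).2.2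
      exact ⟨u, subset_closure (mem_image_of_mem _ hu)⟩
    have hKcl : ∀ m, IsClosed (K m) := fun m => isClosed_closure
    obtain ⟨q, hq⟩ := IsCompact.nonempty_iInter_of_sequence_nonempty_isCompact_isClosed
      K hKsub hKne ((hKcl 0).isCompact) hKcl
    rw [mem_iInter] at hq
    have hqZ : q ∈ Z := by
      rw [← hOinter, mem_iInter]
      intro n
      have h1 : K (n + 1) ⊆ O n := by
        rw [hK]
        simp only
        rw [res_succ, hTcons, res_length]
        exact hclosure' (T' (res x n)) n (x n)
      exact h1 (hq (n + 1))
    have hqT : ∀ m, (⟨q, hqZ⟩ : ↥Z) ∈ T (res x m) := by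
      intro m
      obtain ⟨F, hFcl, hFpre⟩ := isClosed_induced_iff.1 (T' (res x m)).2.1.isClosed
      have h1 : Subtype.val '' T (res x m) ⊆ F := by
        have h0 : T (res x m) ⊆ Subtype.val ⁻¹' F := by
          rw [hFpre]
        exact (image_mono h0).trans (image_preimage_subset _ _)
      have h2 : q ∈ F := hFcl.closure_subset_iff.2 h1 (hq m)
      have h3 : (⟨q, hqZ⟩ : ↥Z) ∈ Subtype.val ⁻¹' F := h2
      rw [hFpre] at h3
      exact h3
    exact ⟨⟨q, hqZ⟩, mem_iInter.2 hqT⟩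


/-! ### Glue lemmas -/

lemma perfect_two_points {D : Set (ℕ → Bool)} (hD : Perfect D) {U : Set ↥D}
    (hU : IsOpen U) (hne : U.Nonempty) : ∃ u ∈ U, ∃ v ∈ U, u ≠ v := by
  obtain ⟨u, hu⟩ := hne
  obtain ⟨O, hO, rfl⟩ := isOpen_induced_iff.1 hU
  have hacc := accPt_iff_nhds.1 (hD.acc u.1 u.2)
  obtain ⟨y, ⟨hyO, hyC⟩, hyne⟩ := hacc O (hO.mem_nhds hu)
  exact ⟨⟨y, hyC⟩, hyO, u, hu, fun h => hyne (congrArg Subtype.val h)⟩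

lemma subtype_image_homeo {s : Set (ℕ → Bool)} (t : Set ↥s) :
    Nonempty (↥t ≃ₜ ↥(Subtype.val '' t)) := by
  have hemb : Topology.IsEmbedding (fun u : ↥t => ((u : ↥s) : ℕ → Bool)) :=
    Topology.IsEmbedding.subtypeVal.comp Topology.IsEmbedding.subtypeVal
  have hrange : Set.range (fun u : ↥t => ((u : ↥s) : ℕ → Bool)) = Subtype.val '' t := by
    rw [show (fun u : ↥t => ((u : ↥s) : ℕ → Bool)) =
      (Subtype.val : ↥s → ℕ → Bool) ∘ (Subtype.val : ↥t → ↥s) from rfl,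
      Set.range_comp, Subtype.range_coe]
  exact ⟨(hemb.toHomeomorph).trans (Homeomorph.setCongr hrange)⟩

lemma hh_subsingleton {s : Set (ℕ → Bool)} (hs : s.Subsingleton) : HHomogeneous ↥s := by
  intro U hU hUne
  obtain ⟨u, hu⟩ := hUne
  have hUuniv : U = Set.univ := Set.eq_univ_of_forall (fun v => by
    have hvu : v = u := Subtype.ext (hs v.2 u.2)
    rw [hvu]; exact hu)
  exact ⟨(Homeomorph.setCongr hUuniv).trans (Homeomorph.Set.univ _)⟩

lemma hh_perfect {D : Set (ℕ → Bool)} (hD : Perfect D) : HHomogeneous ↥D := by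
  intro U hU hUne
  have hDcpt : CompactSpace ↥D := isCompact_iff_compactSpace.1 hD.closed.isCompact
  obtain ⟨u₀, hu₀⟩ := hUne
  have hDne : D.Nonempty := ⟨u₀.1, u₀.2⟩
  set D' : Set (ℕ → Bool) := Subtype.val '' U with hD'
  have hD'ne : D'.Nonempty := ⟨u₀.1, u₀, hu₀, rfl⟩
  have hD'closed : IsClosed D' :=
    (hU.isClosed.isCompact.image continuous_subtype_val).isClosed
  have hD'perf : Perfect D' := by
    refine ⟨hD'closed, ?_⟩
    rintro x ⟨u, hu, rfl⟩
    rw [accPt_iff_nhds]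
    intro V hV
    have hWopen : IsOpen ((Subtype.val ⁻¹' interior V : Set ↥D) ∩ U) :=
      (isOpen_interior.preimage continuous_subtype_val).inter hU.isOpen
    have hWne : ((Subtype.val ⁻¹' interior V : Set ↥D) ∩ U).Nonempty :=
      ⟨u, by rw [mem_preimage]; exact mem_interior_iff_mem_nhds.2 hV, hu⟩
    obtain ⟨a, ha, b, hb, hab⟩ := perfect_two_points hD hWopen hWne
    have hc : ∃ c : ↥D, c ∈ ((Subtype.val ⁻¹' interior V : Set ↥D) ∩ U) ∧ c ≠ u := by
      by_cases hau : a = u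
      · exact ⟨b, hb, fun h => hab (hau.trans h.symm)⟩
      · exact ⟨a, ha, hau⟩
    obtain ⟨c, ⟨hcV, hcU⟩, hcu⟩ := hc
    exact ⟨c.1, ⟨interior_subset hcV, c, hcU, rfl⟩, fun h => hcu (Subtype.ext h)⟩
  obtain ⟨e1⟩ := subtype_image_homeo (s := D) U
  obtain ⟨e2⟩ := cantor_homeo hD'perf hD'ne
  obtain ⟨e3⟩ := cantor_homeo hD hDne
  exact ⟨e1.trans (e2.symm.trans e3)⟩

/-- Cantor–Bendixson style decomposition of a closed subset of Cantor space. -/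
lemma closed_decomp {F : Set (ℕ → Bool)} (hF : IsClosed F) :
    ∃ g : ℕ → Set (ℕ → Bool), (∀ i, g i ⊆ F) ∧ (∀ i, IsClosed (g i)) ∧
      (∀ i, HHomogeneous ↥(g i)) ∧ F = ⋃ i, g i := by
  obtain ⟨V, D, hVct, hDperf, hVD⟩ := exists_countable_union_perfect_of_isClosed hF
  have hDF : D ⊆ F := by rw [hVD]; exact subset_union_right
  rcases eq_empty_or_nonempty V with rfl | hVne
  · refine ⟨fun i => Nat.rec D (fun _ _ => ∅) i, fun i => ?_, fun i => ?_, fun i => ?_, ?_⟩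
    · cases i with
      | zero => exact hDF
      | succ j => exact empty_subset _
    · cases i with
      | zero => exact hDperf.closed
      | succ j => exact isClosed_empty
    · cases i with
      | zero => exact hh_perfect hDperf
      | succ j => exact hh_subsingleton subsingleton_empty
    · apply Subset.antisymm
      · intro x hx
        rw [hVD] at hx
        rcases hx with hx | hx
        · exact absurd hx (notMem_empty x)
        · exact mem_iUnion.2 ⟨0, hx⟩
      · apply iUnion_subset
        intro i
        cases i with
        | zero => exact hDF
        | succ j => exact empty_subset _
  · obtain ⟨v, hv⟩ := Set.Countable.exists_eq_range hVct hVne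
    have hVF : V ⊆ F := by rw [hVD]; exact subset_union_left
    refine ⟨fun i => Nat.rec D (fun j _ => {v j}) i, fun i => ?_, fun i => ?_, fun i => ?_, ?_⟩
    · cases i with
      | zero => exact hDF
      | succ j => exact singleton_subset_iff.2 (hVF (by rw [hv]; exact ⟨j, rfl⟩))
    · cases i with
      | zero => exact hDperf.closed
      | succ j => exact isClosed_singleton
    · cases i with
      | zero => exact hh_perfect hDperf
      | succ j => exact hh_subsingleton subsingleton_singleton
    · apply Subset.antisymm
      · intro x hx
        rw [hVD] at hx
        rcases hx with hx | hx
        · rw [hv] at hx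
          obtain ⟨j, rfl⟩ := hx
          exact mem_iUnion.2 ⟨j + 1, rfl⟩
        · exact mem_iUnion.2 ⟨0, hx⟩
      · apply iUnion_subset
        intro i
        cases i with
        | zero => exact hDF
        | succ j => exact singleton_subset_iff.2 (hVF (by rw [hv]; exact ⟨j, rfl⟩))

lemma isGδ_of_isClosed_cantor {s : Set (ℕ → Bool)} (h : IsClosed s) : IsGδ s := by
  have : s = ⋂ n, ⋃ x ∈ s, cylinder x n := by
    apply Subset.antisymm
    · intro y hy
      exact mem_iInter.2 fun n => mem_iUnion.2 ⟨y, mem_iUnion.2 ⟨hy, self_mem_cylinder y n⟩⟩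
    · intro y hy
      rw [← h.closure_eq]
      rw [mem_closure_iff]
      intro O hO hyO
      obtain ⟨m, hm⟩ := exists_cylinder_subset' hO hyO
      have := mem_iInter.1 hy m
      obtain ⟨x, hx⟩ := mem_iUnion.1 this
      obtain ⟨hxs, hyx⟩ := mem_iUnion.1 hx
      refine ⟨x, hm ?_, hxs⟩
      rw [mem_cylinder_comm]
      exact hyx
  rw [this]
  exact IsGδ.iInter_of_isOpen fun n =>
    isOpen_biUnion fun x _ => (isClopen_cylinder x n).isOpen

/-- The nowhere locally compact part is h-homogeneous. -/
lemma hh_gdelta_nc {Z : Set (ℕ → Bool)} (hZ : IsGδ Z)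
    (hnc : ∀ K : Set (ℕ → Bool), K ⊆ Z → IsCompact K →
      ∀ O : Set (ℕ → Bool), IsOpen O → O ∩ Z ⊆ K → O ∩ Z = ∅) :
    HHomogeneous ↥Z := by
  intro U hU hUne
  obtain ⟨u₀, hu₀⟩ := hUne
  have hZne : Z.Nonempty := ⟨u₀.1, u₀.2⟩
  set Z' : Set (ℕ → Bool) := Subtype.val '' U with hZ'def
  obtain ⟨O₁, hO₁, hpre₁⟩ := isOpen_induced_iff.1 hU.isOpen
  obtain ⟨C₁, hC₁, hpre₂⟩ := isClosed_induced_iff.1 hU.isClosed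
  have hZ'o : Z' = Z ∩ O₁ := by rw [hZ'def, ← hpre₁, Subtype.image_preimage_coe]
  have hZ'c : Z' = Z ∩ C₁ := by rw [hZ'def, ← hpre₂, Subtype.image_preimage_coe]
  have hZ'gd : IsGδ Z' := by rw [hZ'c]; exact hZ.inter (isGδ_of_isClosed_cantor hC₁)
  have hZ'ne : Z'.Nonempty := ⟨u₀.1, u₀, hu₀, rfl⟩
  have hZ'Z : Z' ⊆ Z := by rw [hZ'o]; exact inter_subset_left
  have hnc' : ∀ K : Set (ℕ → Bool), K ⊆ Z' → IsCompact K →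
      ∀ O : Set (ℕ → Bool), IsOpen O → O ∩ Z' ⊆ K → O ∩ Z' = ∅ := by
    intro K hKZ' hK O hO hOZ'
    have key := hnc K (hKZ'.trans hZ'Z) hK (O ∩ O₁) (hO.inter hO₁) (by
      intro x hx
      apply hOZ'
      rw [hZ'o]
      exact ⟨hx.1.1, hx.2, hx.1.2⟩)
    rw [hZ'o, show O ∩ (Z ∩ O₁) = (O ∩ O₁) ∩ Z by
      rw [inter_comm Z O₁, ← inter_assoc]]
    exact key
  obtain ⟨e1⟩ := subtype_image_homeo (s := Z) U
  obtain ⟨e2⟩ := baire_homeo hZ'gd hZ'ne hnc'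
  obtain ⟨e3⟩ := baire_homeo hZ hZne hnc
  exact ⟨e1.trans (e2.symm.trans e3)⟩

lemma fsigma_decomp {X : Set (ℕ → Bool)}
    (hX : ∃ F : ℕ → Set (ℕ → Bool), (∀ n, IsClosed (F n)) ∧ X = ⋃ n, F n) :
    SigmaHomogeneous X := by
  obtain ⟨F, hFcl, rfl⟩ := hX
  choose g hg1 hg2 hg3 hg4 using fun n => closed_decomp (hFcl n)
  set e : ℕ ≃ ℕ × ℕ := (Denumerable.eqv (ℕ × ℕ)).symm with he
  refine ⟨fun i => g (e i).1 (e i).2, fun i => ?_, fun i => ?_, fun i => ?_, ?_⟩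
  · exact (hg1 _ _).trans (subset_iUnion F _)
  · exact (hg2 _ _).preimage continuous_subtype_val
  · exact hg3 _ _
  · apply Subset.antisymm
    · intro x hx
      obtain ⟨n, hn⟩ := mem_iUnion.1 hx
      rw [hg4 n] at hn
      obtain ⟨j, hj⟩ := mem_iUnion.1 hn
      refine mem_iUnion.2 ⟨e.symm (n, j), ?_⟩
      simpa using hj
    · apply iUnion_subset
      intro i
      exact (hg1 _ _).trans (subset_iUnion F _)

lemma gdelta_decomp {X : Set (ℕ → Bool)} (hX : IsGδ X) : SigmaHomogeneous X := by
  classical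
  set 𝒱 : Set (Set (ℕ → Bool)) := {V | (∃ O, IsOpen O ∧ V = X ∩ O) ∧ IsSigmaCompact V}
    with h𝒱
  have hO : ∀ V : ↥𝒱, ∃ O, IsOpen O ∧ (V : Set (ℕ → Bool)) = X ∩ O := fun V => V.2.1
  choose Ov hOvopen hOveq using hO
  set OW := ⋃ V : ↥𝒱, Ov V with hOW
  have hOWopen : IsOpen OW := isOpen_iUnion hOvopen
  set W := X ∩ OW with hWdef
  have hWX : W ⊆ X := inter_subset_left
  have hWunion : W = ⋃ V : ↥𝒱, (V : Set (ℕ → Bool)) := by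
    rw [hWdef, hOW, inter_iUnion]
    exact iUnion_congr fun V => (hOveq V).symm
  -- W is sigma-compact
  have hWsigma : ∃ K : ℕ → Set (ℕ → Bool), (∀ n, IsCompact (K n)) ∧ W = ⋃ n, K n := by
    obtain ⟨T, hTct, hTeq⟩ := TopologicalSpace.isOpen_iUnion_countable Ov hOvopen
    have hWT : W = ⋃ V ∈ T, (V : Set (ℕ → Bool)) := by
      rw [hWdef, hOW, ← hTeq]
      rw [inter_iUnion₂]
      exact iUnion₂_congr fun V _ => (hOveq V).symm
    rcases eq_empty_or_nonempty T with rfl | hTne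
    · refine ⟨fun _ => ∅, fun _ => isCompact_empty, by simp [hWT]⟩
    · obtain ⟨t, ht⟩ := Set.Countable.exists_eq_range hTct hTne
      choose Kt hKt1 hKt2 using fun n => ((t n) : ↥𝒱).2.2
      set e : ℕ ≃ ℕ × ℕ := (Denumerable.eqv (ℕ × ℕ)).symm with he
      refine ⟨fun i => Kt (e i).1 (e i).2, fun i => hKt1 _ _, ?_⟩
      rw [hWT, ht]
      apply Subset.antisymm
      · intro x hx
        obtain ⟨V, hV⟩ := mem_iUnion.1 hx
        obtain ⟨hVT, hxV⟩ := mem_iUnion.1 hV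
        obtain ⟨n, rfl⟩ := hVT
        have : x ∈ ⋃ j, Kt n j := by rw [hKt2 n]; exact hxV
        obtain ⟨j, hj⟩ := mem_iUnion.1 this
        refine mem_iUnion.2 ⟨e.symm (n, j), ?_⟩
        simpa using hj
      · apply iUnion_subset
        intro i
        have h1 : Kt (e i).1 (e i).2 ⊆ ⋃ j, Kt (e i).1 j := subset_iUnion _ _
        rw [hKt2] at h1
        exact h1.trans (fun x hx => mem_iUnion.2 ⟨t (e i).1, mem_iUnion.2 ⟨⟨_, rfl⟩, hx⟩⟩)
  obtain ⟨K, hKcpt, hWK⟩ := hWsigma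
  have hKX : ∀ n, K n ⊆ X := fun n => (subset_iUnion K n).trans (by rw [← hWK]; exact hWX)
  set Z := X ∩ OWᶜ with hZdef
  have hZX : Z ⊆ X := inter_subset_left
  have hXZW : X = Z ∪ W := by
    rw [hZdef, hWdef, ← inter_union_distrib_left, compl_union_self, inter_univ]
  have hZgd : IsGδ Z := hX.inter (isGδ_of_isClosed_cantor hOWopen.isClosed_compl)
  -- the nowhere compactness property of Z
  have hZnc : ∀ Kc : Set (ℕ → Bool), Kc ⊆ Z → IsCompact Kc →
      ∀ O : Set (ℕ → Bool), IsOpen O → O ∩ Z ⊆ Kc → O ∩ Z = ∅ := by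
    intro Kc hKcZ hKc O hOop hOZ
    by_contra hne
    obtain ⟨y, hyO, hyZ⟩ := nonempty_iff_ne_empty.2 hne
    obtain ⟨mB, hB⟩ := exists_cylinder_subset' hOop hyO
    set B := cylinder y mB with hBdef
    have hBclopen : IsClopen B := isClopen_cylinder y mB
    have hyB : y ∈ B := self_mem_cylinder _ _
    have hZBeq : Z ∩ B = (Kc ∩ B) ∩ OWᶜ := by
      apply Subset.antisymm
      · rintro x ⟨hxZ, hxB⟩
        exact ⟨⟨hOZ ⟨hB hxB, hxZ⟩, hxB⟩, hxZ.2⟩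
      · rintro x ⟨⟨hxK, hxB⟩, hxW⟩
        exact ⟨hKcZ hxK, hxB⟩
    have hZBcpt : IsCompact (Z ∩ B) := by
      rw [hZBeq]
      exact (hKc.inter_right hBclopen.isClosed).inter_right hOWopen.isClosed_compl
    have hXB : X ∩ B ∈ 𝒱 := by
      refine ⟨⟨B, hBclopen.isOpen, rfl⟩, ?_⟩
      have hsplit : X ∩ B = (Z ∩ B) ∪ ⋃ n, (K n ∩ B) := by
        calc X ∩ B = (Z ∪ W) ∩ B := by rw [← hXZW]
          _ = Z ∩ B ∪ W ∩ B := union_inter_distrib_right _ _ _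
          _ = Z ∩ B ∪ ⋃ n, (K n ∩ B) := by rw [hWK, iUnion_inter]
      rw [hsplit]
      refine ⟨fun i => Nat.rec (Z ∩ B) (fun j _ => K j ∩ B) i, fun i => ?_, ?_⟩
      · cases i with
        | zero => exact hZBcpt
        | succ j => exact (hKcpt j).inter_right hBclopen.isClosed
      · apply Subset.antisymm
        · apply iUnion_subset
          intro i
          cases i with
          | zero => exact subset_union_left
          | succ j => exact (subset_iUnion (fun n => K n ∩ B) j).trans subset_union_right
        · rintro x (hx | hx)
          · exact mem_iUnion.2 ⟨0, hx⟩
          · obtain ⟨j, hj⟩ := mem_iUnion.1 hx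
            exact mem_iUnion.2 ⟨j + 1, hj⟩
    have hyW : y ∈ W := by
      have hXBW : (X ∩ B : Set (ℕ → Bool)) ⊆ W := by
        rw [hWunion]
        exact fun x hx => mem_iUnion.2 ⟨⟨X ∩ B, hXB⟩, hx⟩
      exact hXBW ⟨hZX hyZ, hyB⟩
    exact hyZ.2 hyW.2
  -- assemble
  choose g hg1 hg2 hg3 hg4 using fun n => closed_decomp (hKcpt n).isClosed
  set e : ℕ ≃ ℕ × ℕ := (Denumerable.eqv (ℕ × ℕ)).symm with he
  refine ⟨fun i => Nat.rec Z (fun j _ => g (e j).1 (e j).2) i,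
    fun i => ?_, fun i => ?_, fun i => ?_, ?_⟩
  · cases i with
    | zero => exact hZX
    | succ j => exact (hg1 _ _).trans ((hKX _))
  · cases i with
    | zero =>
      show IsClosed (Subtype.val ⁻¹' Z : Set ↥X)
      have : (Subtype.val ⁻¹' Z : Set ↥X) = Subtype.val ⁻¹' OWᶜ := by
        rw [hZdef, preimage_inter]
        have hXuniv : (Subtype.val ⁻¹' X : Set ↥X) = univ := eq_univ_of_forall fun u => u.2
        rw [hXuniv, univ_inter]
      rw [this]
      exact hOWopen.isClosed_compl.preimage continuous_subtype_val
    | succ j => exact (hg2 _ _).preimage continuous_subtype_val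
  · cases i with
    | zero => exact hh_gdelta_nc hZgd hZnc
    | succ j => exact hg3 _ _
  · apply Subset.antisymm
    · intro x hx
      rw [hXZW] at hx
      rcases hx with hx | hx
      · exact mem_iUnion.2 ⟨0, hx⟩
      · rw [hWK] at hx
        obtain ⟨n, hn⟩ := mem_iUnion.1 hx
        rw [hg4 n] at hn
        obtain ⟨j, hj⟩ := mem_iUnion.1 hn
        refine mem_iUnion.2 ⟨e.symm (n, j) + 1, ?_⟩
        simpa using hj
    · apply iUnion_subset
      intro i
      cases i with
      | zero => exact hZX
      | succ j => exact (hg1 _ _).trans (hKX _)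

end WithMetric
end SigmaHomAux

/-- Every Fσ subset of the Cantor space is σ-homogeneous, and every Gδ subset
of the Cantor space is σ-homogeneous. -/
theorem fsigma_and_gdelta_sigmaHomogeneous :
    (∀ X : Set (ℕ → Bool),
      (∃ F : ℕ → Set (ℕ → Bool), (∀ n, IsClosed (F n)) ∧ X = ⋃ n, F n) →
      SigmaHomogeneous X) ∧
    (∀ X : Set (ℕ → Bool), IsGδ X → SigmaHomogeneous X) := by
  exact ⟨fun _ hX => SigmaHomAux.fsigma_decomp hX, fun _ hX => SigmaHomAux.gdelta_decomp hX⟩
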